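/- arXiv:1610.09993 — 4 statements merged into one kernel-verified Lean document; each statement's English description precedes it below -/
import Mathlib

section
/- Let t be a nonnegative integer with t < n and |E| < (t² + 3t)/2. Then P(S^n_{r+}) is closed for every integer r with t ≤ r ≤ n if and only if ℒ and ℒ^c are disconnected in G. -/
open Matrix Filter

/-- PSD matrices of rank at most `r`, indexed by a finite type. -/
def psdRank (ι : Type) [Fintype ι] [DecidableEq ι] (r : ℕ) : Set (Matrix ι ι ℝ) :=
  {X | X.PosSemidef ∧ X.rank ≤ r}

/-- Coordinate projection onto the entries indexed by `E`. -/
def proj {n : ℕ} (E : Set (Fin n × Fin n)) (X : Matrix (Fin n) (Fin n) ℝ) : E → ℝ :=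
  fun p => X p.1.1 p.1.2

/-- The simple graph underlying the index set `E` (loops discarded). -/
def graphOf {n : ℕ} (E : Set (Fin n × Fin n)) : SimpleGraph (Fin n) where
  Adj i j := i ≠ j ∧ ((i, j) ∈ E ∨ (j, i) ∈ E)
  symm := by
    refine ⟨?_⟩
    intro i j h
    exact ⟨h.1.symm, h.2.symm⟩
  loopless := by
    refine ⟨?_⟩
    intro i h
    exact h.1 rfl

section AuxLemmas

set_option linter.unusedSectionVars false


variable {m : Type*} [Fintype m] [DecidableEq m]

lemma quadForm {X : Matrix m m ℝ} (hX : X.PosSemidef) (i j : m) (a b : ℝ) :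
    0 ≤ a^2 * X i i + a*b*(X i j + X j i) + b^2 * X j j := by
  have h := hX.dotProduct_mulVec_nonneg (a • (Pi.single i 1 : m → ℝ) + b • (Pi.single j 1 : m → ℝ))
  simp only [star_trivial, mulVec_add, mulVec_smul, mulVec_single, dotProduct_add,
    add_dotProduct, smul_dotProduct, dotProduct_smul, smul_eq_mul, mul_one,
    single_dotProduct] at h
  simp only [MulOpposite.op_one, one_smul, one_mul, Matrix.col_apply] at h
  nlinarith [h]

lemma psd_diag_nonneg {X : Matrix m m ℝ} (hX : X.PosSemidef) (i : m) : 0 ≤ X i i := by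
  have := quadForm hX i i 1 0
  simpa using this

lemma psd_symm_entry {X : Matrix m m ℝ} (hX : X.PosSemidef) (i j : m) : X j i = X i j := by
  have := hX.1.apply i j
  simpa using this

lemma psd_offdiag_zero {X : Matrix m m ℝ} (hX : X.PosSemidef) {i j : m}
    (h : X i i = 0) : X i j = 0 := by
  by_contra hne
  have hsym := psd_symm_entry hX i j
  -- 0 ≤ a*b*(2 X i j) + b^2 X j j for all a, with b = 1
  have key : ∀ a : ℝ, 0 ≤ a * (2 * X i j) + X j j := by
    intro a
    have := quadForm hX i j a 1
    rw [h, hsym] at this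
    nlinarith [this]
  have h1 := key (-(|X j j| + 1) / (2 * X i j))
  have h2 : (2 * X i j) ≠ 0 := by positivity
  rw [div_mul_cancel₀ _ h2] at h1
  have := abs_nonneg (X j j)
  have := le_abs_self (X j j)
  linarith

lemma psd_sq_le {X : Matrix m m ℝ} (hX : X.PosSemidef) (i j : m) :
    (X i j)^2 ≤ X i i * X j j := by
  have hsym := psd_symm_entry hX i j
  have hp := psd_diag_nonneg hX i
  have hr := psd_diag_nonneg hX j
  by_cases h0 : X i i = 0
  · rw [h0, psd_offdiag_zero hX h0]
    simp
  · have hppos : 0 < X i i := lt_of_le_of_ne hp (Ne.symm h0)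
    have q1 := quadForm hX i j (- X i j) (X i i)
    rw [hsym] at q1
    nlinarith [q1]

lemma psd_entry_abs_le {X : Matrix m m ℝ} (hX : X.PosSemidef) {i j : m} {D : ℝ}
    (hi : X i i ≤ D) (hj : X j j ≤ D) : |X i j| ≤ D := by
  have h := psd_sq_le hX i j
  have hp := psd_diag_nonneg hX i
  have hr := psd_diag_nonneg hX j
  have hD : 0 ≤ D := le_trans hp hi
  rw [abs_le]
  constructor <;> nlinarith [h]

lemma psd_vecMulVec (v : m → ℝ) : (vecMulVec v v).PosSemidef := by
  refine Matrix.PosSemidef.of_dotProduct_mulVec_nonneg ?_ ?_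
  · ext i j
    simp [vecMulVec, conjTranspose_apply, mul_comm]
  · intro x
    have : vecMulVec v v *ᵥ x = fun i => v i * (v ⬝ᵥ x) := by
      ext i
      simp [vecMulVec, mulVec, dotProduct, Finset.mul_sum, mul_assoc]
    rw [star_trivial, this]
    have : (x ⬝ᵥ fun i => v i * (v ⬝ᵥ x)) = (x ⬝ᵥ v) * (v ⬝ᵥ x) := by
      simp [dotProduct, Finset.sum_mul, mul_assoc]
    rw [this, dotProduct_comm]
    exact mul_self_nonneg _

lemma psd_smul {X : Matrix m m ℝ} (hX : X.PosSemidef) {c : ℝ} (hc : 0 ≤ c) :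
    (c • X).PosSemidef := by
  refine Matrix.PosSemidef.of_dotProduct_mulVec_nonneg ?_ ?_
  · have h1 := hX.1
    unfold Matrix.IsHermitian at *
    ext i j
    simp only [conjTranspose_apply, Matrix.smul_apply, star_trivial, smul_eq_mul]
    rw [psd_symm_entry hX i j]
  · intro x
    have := hX.dotProduct_mulVec_nonneg x
    simp only [star_trivial, smul_mulVec, dotProduct_smul, smul_eq_mul] at *
    exact mul_nonneg hc this



variable {m : Type*} [Fintype m] [DecidableEq m]

lemma psd_limit (Z : ℕ → Matrix m m ℝ) (X : Matrix m m ℝ)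
    (hpsd : ∀ k, (Z k).PosSemidef)
    (hlim : ∀ i j, Tendsto (fun k => Z k i j) atTop (nhds (X i j))) : X.PosSemidef := by
  refine Matrix.PosSemidef.of_dotProduct_mulVec_nonneg ?_ ?_
  · ext i j
    simp only [conjTranspose_apply, star_trivial]
    have h1 : Tendsto (fun k => Z k j i) atTop (nhds (X j i)) := hlim j i
    have h2 : (fun k => Z k j i) = fun k => Z k i j := by
      funext k
      have := (hpsd k).1.apply i j
      simpa using this
    rw [h2] at h1
    exact tendsto_nhds_unique h1 (hlim i j)
  · intro x
    rw [star_trivial]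
    have e : ∀ M : Matrix m m ℝ, x ⬝ᵥ (M *ᵥ x) = ∑ i, ∑ j, x i * (M i j * x j) := by
      intro M
      simp [dotProduct, mulVec, Finset.mul_sum]
    have ht : Tendsto (fun k => x ⬝ᵥ (Z k *ᵥ x)) atTop (nhds (x ⬝ᵥ (X *ᵥ x))) := by
      simp only [e]
      apply tendsto_finset_sum
      intro i _
      apply tendsto_finset_sum
      intro j _
      exact tendsto_const_nhds.mul ((hlim i j).mul tendsto_const_nhds)
    refine ge_of_tendsto' ht fun k => ?_
    have := (hpsd k).dotProduct_mulVec_nonneg x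
    rwa [star_trivial] at this

lemma rank_reduce {n : ℕ} (E : Finset (Fin n × Fin n)) (X : Matrix (Fin n) (Fin n) ℝ)
    (hX : X.PosSemidef) (hrank : 0 < X.rank)
    (hcard : E.card < (X.rank + 1).choose 2) :
    ∃ Z : Matrix (Fin n) (Fin n) ℝ, Z.PosSemidef ∧ Z.rank < X.rank ∧
      proj (↑E) Z = proj (↑E) X := by
  classical
  have hH := hX.1
  set lam := hH.eigenvalues with hlam
  set U : Matrix (Fin n) (Fin n) ℝ := (hH.eigenvectorUnitary : Matrix (Fin n) (Fin n) ℝ) with hUdef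
  have hXdecomp : ∀ k l, X k l = ∑ i, U k i * lam i * U l i := by
    intro k l
    conv_lhs => rw [hH.spectral_theorem, Unitary.conjStarAlgAut_apply]
    rw [Matrix.mul_apply]
    refine Finset.sum_congr rfl fun i _ => ?_
    simp only [Matrix.mul_diagonal, Matrix.star_apply, star_trivial, Function.comp_apply]
    rfl
  set T := {i : Fin n // lam i ≠ 0} with hTdef
  have hcardT : Fintype.card T = X.rank := hH.rank_eq_card_non_zero_eigs.symm
  set Q : Matrix (Fin n) T ℝ := Matrix.of (fun k i => U k i.1 * Real.sqrt (lam i.1)) with hQdef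
  have hQX : Q * Qᴴ = X := by
    ext k l
    rw [Matrix.mul_apply]
    have e1 : ∀ i : T, Q k i * Qᴴ i l = U k i.1 * lam i.1 * U l i.1 := by
      intro i
      simp only [hQdef, Matrix.of_apply, conjTranspose_apply, star_trivial]
      rw [show U k i.1 * Real.sqrt (lam i.1) * (U l i.1 * Real.sqrt (lam i.1))
          = U k i.1 * U l i.1 * (Real.sqrt (lam i.1) * Real.sqrt (lam i.1)) from by ring,
        Real.mul_self_sqrt (hX.eigenvalues_nonneg i.1)]
      ring
    rw [Finset.sum_congr rfl fun i _ => e1 i, hXdecomp k l]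
    rw [← Finset.sum_subtype (Finset.univ.filter fun i => lam i ≠ 0)
      (by simp) (fun i => U k i * lam i * U l i)]
    refine Finset.sum_filter_of_ne fun x _ hx => ?_
    intro h0
    exact hx (by rw [h0]; ring)
  have hTne : Nonempty T := by
    rw [← Fintype.card_pos_iff, hcardT]; exact hrank
  -- the linear map from Sym2 T functions
  let F : (Sym2 T → ℝ) →ₗ[ℝ] ((↑E : Set (Fin n × Fin n)) → ℝ) := {
    toFun := fun f => proj ↑E (Q * (Matrix.of fun i j : T => f s(i,j)) * Qᴴ)
    map_add' := by
      intro f g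
      have h1 : (Matrix.of fun i j : T => (f + g) s(i,j))
          = (Matrix.of fun i j : T => f s(i,j)) + (Matrix.of fun i j : T => g s(i,j)) := by
        ext i j; simp
      funext p
      show ((Q * (Matrix.of fun i j : T => (f + g) s(i,j))) * Qᴴ) p.1.1 p.1.2 = _
      rw [h1, Matrix.mul_add, Matrix.add_mul]
      simp [proj, Matrix.add_apply]
    map_smul' := by
      intro c f
      have h1 : (Matrix.of fun i j : T => (c • f) s(i,j))
          = c • (Matrix.of fun i j : T => f s(i,j)) := by
        ext i j; simp
      funext p
      show ((Q * (Matrix.of fun i j : T => (c • f) s(i,j))) * Qᴴ) p.1.1 p.1.2 = _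
      rw [h1, Matrix.mul_smul, Matrix.smul_mul]
      simp [proj, Matrix.smul_apply] }
  have hcardE : Fintype.card (↑E : Set (Fin n × Fin n)) = E.card := by simp
  have hnotinj : ¬ Function.Injective F := by
    intro hinj
    have hle := LinearMap.finrank_le_finrank_of_injective hinj
    rw [Module.finrank_pi, Module.finrank_pi, hcardE, Sym2.card, hcardT] at hle
    omega
  obtain ⟨f, g, hfg, hne⟩ := Function.not_injective_iff.mp hnotinj
  set h := f - g with hhdef
  have hh0 : h ≠ 0 := sub_ne_zero_of_ne hne
  set Y : Matrix T T ℝ := Matrix.of (fun i j : T => h s(i,j)) with hYdef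
  have hFh : proj ↑E (Q * Y * Qᴴ) = 0 := by
    have : F h = F f - F g := map_sub F f g
    rw [hfg, sub_self] at this
    exact this
  have hYsymm : Y.IsHermitian := by
    ext i j
    simp only [conjTranspose_apply, hYdef, Matrix.of_apply, star_trivial]
    exact congrArg h (Sym2.eq_swap)
  have hYne : Y ≠ 0 := by
    intro h0
    apply hh0
    funext z
    induction z using Sym2.ind with
    | _ i j =>
      have := congrFun (congrFun h0 i) j
      simpa [hYdef] using this
  set mu := hYsymm.eigenvalues with hmudef
  obtain ⟨i0, -, hi0⟩ := Finset.exists_max_image (Finset.univ : Finset T)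
    (fun i => |mu i|) ⟨hTne.some, Finset.mem_univ _⟩
  set V : Matrix T T ℝ := (hYsymm.eigenvectorUnitary : Matrix T T ℝ) with hVdef
  have hmu0 : mu i0 ≠ 0 := by
    intro h0
    apply hYne
    have hall : (RCLike.ofReal ∘ mu : T → ℝ) = 0 := by
      funext i
      have h1 := hi0 i (Finset.mem_univ i)
      rw [h0] at h1
      simp only [abs_zero] at h1
      have : mu i = 0 := abs_nonpos_iff.mp h1
      simpa using this
    have hsp := hYsymm.spectral_theorem
    rw [hall] at hsp
    have hz : Matrix.diagonal (0 : T → ℝ) = 0 := by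
      ext i j
      rcases eq_or_ne i j with rfl | hij
      · simp
      · simp [Matrix.diagonal_apply_ne _ hij]
    rw [hz, Unitary.conjStarAlgAut_apply, Matrix.mul_zero, Matrix.zero_mul] at hsp
    exact hsp
  set c : ℝ := 1 / mu i0 with hcdef
  set d : T → ℝ := fun i => 1 - mu i / mu i0 with hddef
  have hd0 : ∀ i, 0 ≤ d i := by
    intro i
    have h1 : |mu i / mu i0| ≤ 1 := by
      rw [abs_div]
      exact div_le_one_of_le₀ (hi0 i (Finset.mem_univ i)) (abs_nonneg _)
    have := le_abs_self (mu i / mu i0)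
    simp only [hddef]
    linarith
  have hdi0 : d i0 = 0 := by simp [hddef, div_self hmu0]
  have hM : (V : Matrix T T ℝ) * diagonal d * star (V : Matrix T T ℝ) = 1 - c • Y := by
    have hsp : Y = (V : Matrix T T ℝ) * diagonal (RCLike.ofReal ∘ mu)
        * star (V : Matrix T T ℝ) := hYsymm.spectral_theorem
    have hVV : (V : Matrix T T ℝ) * star (V : Matrix T T ℝ) = 1 :=
      mem_unitaryGroup_iff.mp hYsymm.eigenvectorUnitary.2
    have hof : (RCLike.ofReal ∘ mu : T → ℝ) = mu := by funext i; rfl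
    have hdfun : d = fun i => 1 - c * mu i := by
      funext i
      simp only [hddef, hcdef]
      ring
    have hdiag : diagonal d = 1 - c • diagonal mu := by
      rw [hdfun]
      ext i j
      rcases eq_or_ne i j with rfl | hij
      · simp [Matrix.sub_apply, Matrix.smul_apply, Matrix.one_apply_eq,
          Matrix.diagonal_apply_eq]
      · simp [Matrix.diagonal_apply_ne _ hij, Matrix.sub_apply, Matrix.smul_apply,
          Matrix.one_apply_ne hij]
    rw [hdiag, Matrix.mul_sub, Matrix.sub_mul, Matrix.mul_one, hVV, Matrix.mul_smul,
      Matrix.smul_mul]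
    conv_rhs => rw [hsp, hof]
  refine ⟨Q * ((V : Matrix T T ℝ) * diagonal d * star (V : Matrix T T ℝ)) * Qᴴ, ?_, ?_, ?_⟩
  · have hDpsd : (diagonal d).PosSemidef := Matrix.PosSemidef.diagonal hd0
    have h1 : ((V : Matrix T T ℝ) * diagonal d * (V : Matrix T T ℝ)ᴴ).PosSemidef :=
      hDpsd.mul_mul_conjTranspose_same _
    rw [← Matrix.star_eq_conjTranspose] at h1
    exact h1.mul_mul_conjTranspose_same Q
  · have h1 : Q * ((V : Matrix T T ℝ) * diagonal d * star (V : Matrix T T ℝ)) * Qᴴ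
        = (Q * (V : Matrix T T ℝ) * diagonal d) * (star (V : Matrix T T ℝ) * Qᴴ) := by
      simp only [Matrix.mul_assoc]
    rw [h1]
    calc ((Q * (V : Matrix T T ℝ) * diagonal d) * (star (V : Matrix T T ℝ) * Qᴴ)).rank
        ≤ (Q * (V : Matrix T T ℝ) * diagonal d).rank := Matrix.rank_mul_le_left _ _
      _ ≤ (diagonal d).rank := Matrix.rank_mul_le_right _ _
      _ < X.rank := by
          rw [Matrix.rank_diagonal, ← hcardT]
          exact Fintype.card_subtype_lt (x := i0) (by simp [hdi0])
  · rw [hM]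
    funext p
    have hzero : (Q * Y * Qᴴ) p.1.1 p.1.2 = 0 := congrFun hFh p
    simp only [proj, Matrix.mul_sub, Matrix.sub_mul, Matrix.mul_one, Matrix.mul_smul,
      Matrix.smul_mul, hQX, Matrix.sub_apply, Matrix.smul_apply, smul_eq_mul, hzero, mul_zero,
      sub_zero]


lemma pataki {n : ℕ} (E : Finset (Fin n × Fin n)) (t : ℕ)
    (hcard : E.card < (t + 2).choose 2) (X : Matrix (Fin n) (Fin n) ℝ) (hX : X.PosSemidef) :
    ∃ Z : Matrix (Fin n) (Fin n) ℝ, Z.PosSemidef ∧ Z.rank ≤ t ∧ proj (↑E) Z = proj (↑E) X := by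
  suffices H : ∀ s (X : Matrix (Fin n) (Fin n) ℝ), X.rank ≤ s → X.PosSemidef →
      ∃ Z : Matrix (Fin n) (Fin n) ℝ, Z.PosSemidef ∧ Z.rank ≤ t ∧ proj (↑E) Z = proj (↑E) X from
    H X.rank X le_rfl hX
  intro s
  induction s with
  | zero => exact fun X hr hX => ⟨X, hX, by omega, rfl⟩
  | succ s ih =>
    intro X hr hX
    by_cases hle : X.rank ≤ t
    · exact ⟨X, hX, hle, rfl⟩
    · push_neg at hle
      have hc2 : E.card < (X.rank + 1).choose 2 :=
        lt_of_lt_of_le hcard (Nat.choose_le_choose 2 (by omega))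
      obtain ⟨Z, hZ, hZr, hZp⟩ := rank_reduce E X hX (by omega) hc2
      obtain ⟨W, h1, h2, h3⟩ := ih Z (by omega) hZ
      exact ⟨W, h1, h2, h3.trans hZp⟩

lemma cross {n : ℕ} {G : SimpleGraph (Fin n)} {L : Fin n → Prop} :
    ∀ {a b : Fin n}, G.Walk a b → L a → ¬ L b →
      ∃ u v : Fin n, L u ∧ ¬ L v ∧ G.Adj u v := by
  intro a b w
  induction w with
  | nil => exact fun h1 h2 => absurd h1 h2
  | @cons a c b h p ih =>
    intro h1 h2
    by_cases hc : L c
    · exact ih hc h2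
    · exact ⟨a, c, h1, hc, h⟩

lemma forward {n : ℕ} (E : Finset (Fin n × Fin n))
    (hclosed : IsClosed (proj (↑E : Set (Fin n × Fin n)) '' psdRank (Fin n) n))
    {u w : Fin n} (huw : u ≠ w) (hE : (u, w) ∈ E ∨ (w, u) ∈ E)
    (hu : (u, u) ∈ E) (hw : (w, w) ∉ E) : False := by
  classical
  set v : ℕ → Fin n → ℝ :=
    fun k => Pi.single u (1/((k:ℝ)+1)) + Pi.single w ((k:ℝ)+1) with hvdef
  set A : ℕ → Matrix (Fin n) (Fin n) ℝ := fun k => vecMulVec (v k) (v k) with hAdef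
  have hA : ∀ k, A k ∈ psdRank (Fin n) n := fun k =>
    ⟨psd_vecMulVec _, (Matrix.rank_le_card_width _).trans (Fintype.card_fin n).le⟩
  set ystar : (↑E : Set (Fin n × Fin n)) → ℝ := fun p =>
    if (p.1.1 = u ∧ p.1.2 = w) ∨ (p.1.1 = w ∧ p.1.2 = u) then 1 else 0 with hydef
  have hv : ∀ k x, v k x
      = (if x = u then 1/((k:ℝ)+1) else 0) + (if x = w then (k:ℝ)+1 else 0) := by
    intro k x
    simp [hvdef, Pi.single_apply]
  have hk0 : ∀ k : ℕ, ((k:ℝ)+1) ≠ 0 := fun k => by positivity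
  have hone : Tendsto (fun k : ℕ => 1/((k:ℝ)+1)) atTop (nhds 0) :=
    tendsto_one_div_add_atTop_nhds_zero_nat
  have hlim : Tendsto (fun k => proj (↑E) (A k)) atTop (nhds ystar) := by
    rw [tendsto_pi_nhds]
    intro p
    have hform : ∀ k, proj (↑E : Set (Fin n × Fin n)) (A k) p = v k p.1.1 * v k p.1.2 := by
      intro k
      simp [proj, hAdef, vecMulVec_apply]
    simp only [hform]
    have hval : ∀ (hc : ¬((p.1.1 = u ∧ p.1.2 = w) ∨ (p.1.1 = w ∧ p.1.2 = u))), ystar p = 0 := by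
      intro hc
      simp only [hydef]
      rw [if_neg hc]
    by_cases h1 : p.1.1 = u
    · by_cases h2 : p.1.2 = w
      · have hfun : (fun k : ℕ => v k p.1.1 * v k p.1.2) = fun _ => (1:ℝ) := by
          funext k
          rw [h1, h2, hv k u, hv k w]
          rw [if_pos rfl, if_neg huw, if_neg (Ne.symm huw), if_pos rfl]
          field_simp
          ring
        have hval1 : ystar p = 1 := by
          simp only [hydef]
          rw [if_pos (Or.inl ⟨h1, h2⟩)]
        rw [hfun, hval1]
        exact tendsto_const_nhds
      · by_cases h3 : p.1.2 = u
        · have hfun : (fun k : ℕ => v k p.1.1 * v k p.1.2)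
              = fun k : ℕ => (1/((k:ℝ)+1)) * (1/((k:ℝ)+1)) := by
            funext k
            rw [h1, h3, hv k u]
            rw [if_pos rfl, if_neg huw]
            ring
          rw [hfun, hval (by rintro (⟨-, hb⟩ | ⟨ha, -⟩); exact h2 hb; exact huw (h1.symm.trans ha))]
          simpa using hone.mul hone
        · have hfun : (fun k : ℕ => v k p.1.1 * v k p.1.2) = fun _ => (0:ℝ) := by
            funext k
            rw [h1, hv k u, hv k p.1.2]
            rw [if_pos rfl, if_neg huw, if_neg h3, if_neg h2]
            ring
          rw [hfun, hval (by rintro (⟨-, hb⟩ | ⟨ha, -⟩); exact h2 hb; exact huw (h1 ▸ ha))]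
          exact tendsto_const_nhds
    · by_cases h4 : p.1.1 = w
      · by_cases h5 : p.1.2 = u
        · have hfun : (fun k : ℕ => v k p.1.1 * v k p.1.2) = fun _ => (1:ℝ) := by
            funext k
            rw [h4, h5, hv k w, hv k u]
            rw [if_neg (Ne.symm huw), if_pos rfl, if_pos rfl, if_neg huw]
            field_simp
            ring
          have hval1 : ystar p = 1 := by
            simp only [hydef]
            rw [if_pos (Or.inr ⟨h4, h5⟩)]
          rw [hfun, hval1]
          exact tendsto_const_nhds
        · have h6 : p.1.2 ≠ w := by
            intro h6
            apply hw
            have hmem : (p.1.1, p.1.2) ∈ E := by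
              have := p.2
              simpa using this
            rwa [h4, h6] at hmem
          have hfun : (fun k : ℕ => v k p.1.1 * v k p.1.2) = fun _ => (0:ℝ) := by
            funext k
            rw [h4, hv k w, hv k p.1.2]
            rw [if_neg (Ne.symm huw), if_pos rfl, if_neg h5, if_neg h6]
            ring
          rw [hfun, hval (by rintro (⟨ha, -⟩ | ⟨-, hb⟩); exact h1 ha; exact h5 hb)]
          exact tendsto_const_nhds
      · have hfun : (fun k : ℕ => v k p.1.1 * v k p.1.2) = fun _ => (0:ℝ) := by
          funext k
          rw [hv k p.1.1, if_neg h1, if_neg h4]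
          ring
        rw [hfun, hval (by rintro (⟨ha, -⟩ | ⟨ha, -⟩); exact h1 ha; exact h4 ha)]
        exact tendsto_const_nhds
  have hy : ystar ∈ proj (↑E : Set (Fin n × Fin n)) '' psdRank (Fin n) n :=
    hclosed.mem_of_tendsto hlim (Filter.Eventually.of_forall fun k => ⟨A k, hA k, rfl⟩)
  obtain ⟨X, hXmem, hXproj⟩ := hy
  have hXuu : X u u = 0 := by
    have h := congrFun hXproj ⟨(u, u), Finset.mem_coe.mpr hu⟩
    simp only [proj, hydef] at h
    rwa [if_neg (by simp [huw])] at h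
  have hXuw : X u w = 0 := psd_offdiag_zero hXmem.1 hXuu
  have hXwu : X w u = 0 := by
    rw [psd_symm_entry hXmem.1 u w, hXuw]
  rcases hE with hE | hE
  · have h := congrFun hXproj ⟨(u, w), Finset.mem_coe.mpr hE⟩
    simp only [proj] at h
    have hy1 : ystar ⟨(u, w), Finset.mem_coe.mpr hE⟩ = 1 := by simp [hydef]
    rw [hy1, hXuw] at h
    exact zero_ne_one h
  · have h := congrFun hXproj ⟨(w, u), Finset.mem_coe.mpr hE⟩
    simp only [proj] at h
    have hy1 : ystar ⟨(w, u), Finset.mem_coe.mpr hE⟩ = 1 := by simp [hydef]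
    rw [hy1, hXwu] at h
    exact zero_ne_one h


lemma reverse {n : ℕ} (hn : 2 ≤ n) (E : Finset (Fin n × Fin n))
    (hup : ∀ p ∈ E, p.1 ≤ p.2) (t : ℕ)
    (hcard : E.card < (t + 2).choose 2)
    (hdisc : ∀ i j : Fin n, (i, i) ∈ E → (j, j) ∉ E →
      ¬ (graphOf (↑E : Set (Fin n × Fin n))).Reachable i j)
    (r : ℕ) (hrt : t ≤ r) :
    IsClosed (proj (↑E : Set (Fin n × Fin n)) '' psdRank (Fin n) r) := by
  classical
  -- no edge joins a looped and an unlooped vertex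
  have hkey : ∀ p ∈ E, ((p.1, p.1) ∈ E ↔ (p.2, p.2) ∈ E) := by
    intro p hp
    by_cases hpe : p.1 = p.2
    · rw [hpe]
    · have hadj : (graphOf (↑E : Set (Fin n × Fin n))).Adj p.1 p.2 :=
        ⟨hpe, Or.inl (Finset.mem_coe.mpr hp)⟩
      constructor
      · intro h1
        by_contra h2
        exact hdisc p.1 p.2 h1 h2 hadj.reachable
      · intro h1
        by_contra h2
        exact hdisc p.2 p.1 h1 h2 hadj.symm.reachable
  set S : Set ((↑E : Set (Fin n × Fin n)) → ℝ) :=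
    {y | ∃ X : Matrix (Fin n) (Fin n) ℝ, X.PosSemidef ∧
      (∀ i j : Fin n, ¬((i, i) ∈ E ∧ (j, j) ∈ E) → X i j = 0) ∧
      (∀ p : (↑E : Set (Fin n × Fin n)), (p.1.1, p.1.1) ∈ E → X p.1.1 p.1.2 = y p)} with hSdef
  have heq : proj (↑E : Set (Fin n × Fin n)) '' psdRank (Fin n) r = S := by
    apply Set.eq_of_subset_of_subset
    · rintro y ⟨X, ⟨hpsd, -⟩, rfl⟩
      set d : Fin n → ℝ := fun i => if (i, i) ∈ E then 1 else 0 with hddef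
      set D : Matrix (Fin n) (Fin n) ℝ := diagonal d with hDdef
      have hDconj : Dᴴ = D := by
        rw [hDdef, diagonal_conjTranspose]
        have hsd : star d = d := by
          funext i
          exact star_trivial _
        rw [hsd]
      have hent : ∀ i j, (D * X * Dᴴ) i j = d i * X i j * d j := by
        intro i j
        rw [hDconj, hDdef, Matrix.mul_diagonal, Matrix.diagonal_mul]
      refine ⟨D * X * Dᴴ, hpsd.mul_mul_conjTranspose_same D, ?_, ?_⟩
      · intro i j hij
        rw [hent]
        rcases not_and_or.mp hij with h | h
        · rw [hddef]
          simp only [if_neg h]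
          ring
        · rw [hddef]
          simp only [if_neg h]
          ring
      · intro p hp1
        have hp2 : (p.1.2, p.1.2) ∈ E := by
          have hpm : (p.1.1, p.1.2) ∈ E := by
            have := p.2
            simpa using this
          have := hkey (p.1.1, p.1.2) hpm
          exact this.mp hp1
        rw [hent, hddef]
        simp only [if_pos hp1, if_pos hp2]
        simp [proj]
    · rintro y ⟨X, hpsd, hsupp, hmatch⟩
      -- build a completion with the free entries
      set yval : {x // x ∈ E} → ℝ := fun q => y ⟨q.1, Finset.mem_coe.mpr q.2⟩ with hyvaldef
      set sgn : ℝ → ℝ := fun c => if 0 ≤ c then 1 else -1 with hsgndef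
      have hsgn_nonneg : ∀ c : ℝ, 0 ≤ sgn c * c := by
        intro c
        rw [hsgndef]
        dsimp only
        split_ifs with h
        · simpa using h
        · push_neg at h
          nlinarith
      have hsgn_sq : ∀ c : ℝ, sgn c * sgn c = 1 := by
        intro c
        rw [hsgndef]
        dsimp only
        split_ifs <;> norm_num
      set uvec : {x // x ∈ E} → (Fin n → ℝ) :=
        fun q => Pi.single q.1.1 (sgn (yval q)) + Pi.single q.1.2 1 with huvecdef
      have huval : ∀ q x, uvec q x
          = (if x = q.1.1 then sgn (yval q) else 0) + (if x = q.1.2 then 1 else 0) := by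
        intro q x
        simp [huvecdef, Pi.single_apply]
      set term : {x // x ∈ E} → Matrix (Fin n) (Fin n) ℝ :=
        fun q => if (q.1.1, q.1.1) ∈ E then 0
          else (sgn (yval q) * yval q) • vecMulVec (uvec q) (uvec q) with htermdef
      set N : Matrix (Fin n) (Fin n) ℝ := ∑ q ∈ E.attach, term q with hNdef
      have htermpsd : ∀ q, (term q).PosSemidef := by
        intro q
        rw [htermdef]
        dsimp only
        split_ifs
        · exact Matrix.PosSemidef.zero
        · exact psd_smul (psd_vecMulVec _) (hsgn_nonneg _)
      have hNpsd : N.PosSemidef := by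
        rw [hNdef]
        induction E.attach using Finset.induction_on with
        | empty => simpa using Matrix.PosSemidef.zero
        | insert _ _ hq ih =>
          rw [Finset.sum_insert hq]
          exact (htermpsd _).add ih
      -- entries of terms
      have hloop2 : ∀ q : {x // x ∈ E}, (q.1.1, q.1.1) ∉ E → (q.1.2, q.1.2) ∉ E := by
        intro q h1 h2
        exact h1 ((hkey q.1 q.2).mpr h2)
      have hterm_entry : ∀ q i j, term q i j = 0 ∨
          ((q.1.1, q.1.1) ∉ E ∧
            term q i j = (sgn (yval q) * yval q) * (uvec q i * uvec q j)) := by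
        intro q i j
        rw [htermdef]
        dsimp only
        split_ifs with h
        · left; simp
        · right
          exact ⟨h, by rw [Matrix.smul_apply, vecMulVec_apply, smul_eq_mul]⟩
      have hN0 : ∀ i j, ((i, i) ∈ E ∨ (j, j) ∈ E) → N i j = 0 := by
        intro i j hij
        rw [hNdef, Matrix.sum_apply]
        refine Finset.sum_eq_zero fun q _ => ?_
        rcases hterm_entry q i j with h | ⟨hq1, h⟩
        · exact h
        · have hq2 := hloop2 q hq1
          rcases hij with hi | hj
          · have hui : uvec q i = 0 := by
              rw [huval, if_neg (fun he => hq1 (by rw [← he]; exact hi)),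
                if_neg (fun he => hq2 (by rw [← he]; exact hi))]
              ring
            rw [h, hui]
            ring
          · have huj : uvec q j = 0 := by
              rw [huval, if_neg (fun he => hq1 (by rw [← he]; exact hj)),
                if_neg (fun he => hq2 (by rw [← he]; exact hj))]
              ring
            rw [h, huj]
            ring
      have hNmatch : ∀ p : (↑E : Set (Fin n × Fin n)), (p.1.1, p.1.1) ∉ E →
          N p.1.1 p.1.2 = y p := by
        intro p hla
        have hpm : (p.1.1, p.1.2) ∈ E := by
          have := p.2
          simpa using this
        have hab : p.1.1 ≠ p.1.2 := by
          intro he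
          apply hla
          nth_rewrite 2 [he]
          exact hpm
        set q0 : {x // x ∈ E} := ⟨(p.1.1, p.1.2), hpm⟩ with hq0def
        have hq01 : q0.1.1 = p.1.1 := rfl
        have hq02 : q0.1.2 = p.1.2 := rfl
        rw [hNdef, Matrix.sum_apply]
        rw [Finset.sum_eq_single q0]
        · -- the main term
          rw [htermdef]
          dsimp only
          rw [if_neg (by rw [hq01]; exact hla)]
          have hu1 : uvec q0 p.1.1 = sgn (yval q0) := by
            rw [huval, hq01, hq02, if_pos rfl, if_neg hab]
            ring
          have hu2 : uvec q0 p.1.2 = 1 := by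
            rw [huval, hq01, hq02, if_neg (Ne.symm hab), if_pos rfl]
            ring
          rw [Matrix.smul_apply, vecMulVec_apply, hu1, hu2, smul_eq_mul]
          have h5 : sgn (yval q0) * yval q0 * (sgn (yval q0) * 1)
              = (sgn (yval q0) * sgn (yval q0)) * yval q0 := by ring
          rw [h5, hsgn_sq]
          have h6 : yval q0 = y p := by
            rw [hyvaldef]
          rw [h6]
          ring
        · -- other terms vanish
          intro q hq hqne
          rcases hterm_entry q p.1.1 p.1.2 with h | ⟨hq1, h⟩
          · exact h
          · have hq2 := hloop2 q hq1
            rw [h]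
            have huu : uvec q p.1.1 * uvec q p.1.2 = 0 := by
              by_cases e1 : p.1.1 = q.1.1
              · by_cases e2 : p.1.2 = q.1.2
                · exfalso
                  apply hqne
                  rw [hq0def]
                  apply Subtype.ext
                  exact Prod.ext e1.symm e2.symm
                · have e3 : p.1.2 ≠ q.1.1 := by
                    intro he
                    exact hab (e1.trans he.symm)
                  have : uvec q p.1.2 = 0 := by
                    rw [huval, if_neg e3, if_neg e2]
                    ring
                  rw [this]
                  ring
              · by_cases e3 : p.1.1 = q.1.2
                · by_cases e4 : p.1.2 = q.1.1
                  · exfalso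
                    have h1 := hup q.1 q.2
                    have h2 := hup (p.1.1, p.1.2) hpm
                    simp only at h1 h2
                    apply hab
                    apply le_antisymm h2
                    rw [← e4, ← e3] at h1
                    exact h1
                  · have e5 : p.1.2 ≠ q.1.2 := by
                      intro he
                      exact hab (e3.trans he.symm)
                    have : uvec q p.1.2 = 0 := by
                      rw [huval, if_neg e4, if_neg e5]
                      ring
                    rw [this]
                    ring
                · have : uvec q p.1.1 = 0 := by
                    rw [huval, if_neg e1, if_neg e3]
                    ring
                  rw [this]
                  ring
            rw [huu]
            ring
        · intro h
          exact absurd (Finset.mem_attach _ _) h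
      -- the completed matrix
      have hWproj : proj (↑E : Set (Fin n × Fin n)) (X + N) = y := by
        funext p
        by_cases hL : (p.1.1, p.1.1) ∈ E
        · have h1 := hmatch p hL
          have h2 := hN0 p.1.1 p.1.2 (Or.inl hL)
          simp only [proj, Matrix.add_apply, h1, h2, add_zero]
        · have h1 : X p.1.1 p.1.2 = 0 := hsupp _ _ (fun hc => hL hc.1)
          have h2 := hNmatch p hL
          simp only [proj, Matrix.add_apply, h1, h2, zero_add]
      obtain ⟨Z, hZpsd, hZrank, hZproj⟩ := pataki E t hcard (X + N) (hpsd.add hNpsd)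
      exact ⟨Z, ⟨hZpsd, hZrank.trans hrt⟩, hZproj.trans hWproj⟩
  rw [heq]
  -- S is closed
  apply IsSeqClosed.isClosed
  intro yseq y hmem hlim
  simp only [hSdef, Set.mem_setOf_eq] at hmem ⊢
  choose Xs hpsd hsupp hmatch using hmem
  have hco : ∀ p, Tendsto (fun k => yseq k p) atTop (nhds (y p)) := tendsto_pi_nhds.mp hlim
  have hb : ∀ p, ∃ b : ℝ, ∀ k, |yseq k p| ≤ b := by
    intro p
    obtain ⟨b, hbb⟩ := ((hco p).abs).bddAbove_range
    exact ⟨b, fun k => hbb (Set.mem_range_self k)⟩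
  choose g hg using hb
  have hgnn : ∀ p, 0 ≤ g p := fun p => le_trans (abs_nonneg _) (hg p 0)
  set f : Fin n → ℝ := fun i =>
    if h : (i, i) ∈ E then g ⟨(i, i), Finset.mem_coe.mpr h⟩ else 0 with hfdef
  have hfnn : ∀ i, 0 ≤ f i := by
    intro i
    rw [hfdef]
    dsimp only
    split_ifs with h
    · exact hgnn _
    · exact le_refl 0
  have hne : (Finset.univ : Finset (Fin n)).Nonempty :=
    ⟨⟨0, by omega⟩, Finset.mem_univ _⟩
  set D : ℝ := Finset.univ.sup' hne f with hDdef
  have hD0 : 0 ≤ D := le_trans (hfnn ⟨0, by omega⟩) (Finset.le_sup' f (Finset.mem_univ _))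
  have hdiagle : ∀ k i, (i, i) ∈ E → Xs k i i ≤ D := by
    intro k i h
    have h1 : Xs k i i = yseq k ⟨(i, i), Finset.mem_coe.mpr h⟩ :=
      hmatch k ⟨(i, i), Finset.mem_coe.mpr h⟩ h
    calc Xs k i i = yseq k ⟨(i, i), Finset.mem_coe.mpr h⟩ := h1
      _ ≤ |yseq k ⟨(i, i), Finset.mem_coe.mpr h⟩| := le_abs_self _
      _ ≤ g ⟨(i, i), Finset.mem_coe.mpr h⟩ := hg _ k
      _ = f i := by rw [hfdef]; simp only; rw [dif_pos h]
      _ ≤ D := Finset.le_sup' f (Finset.mem_univ _)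
  have habs : ∀ k i j, |Xs k i j| ≤ D := by
    intro k i j
    by_cases hij : (i, i) ∈ E ∧ (j, j) ∈ E
    · exact psd_entry_abs_le (hpsd k) (hdiagle k i hij.1) (hdiagle k j hij.2)
    · rw [hsupp k i j hij]
      simpa using hD0
  set K : Set (Fin n → Fin n → ℝ) :=
    Set.univ.pi fun _ => Set.univ.pi fun _ => Set.Icc (-D) D with hKdef
  have hKcomp : IsCompact K :=
    isCompact_univ_pi fun _ => isCompact_univ_pi fun _ => isCompact_Icc
  have hmemK : ∀ k, (fun i j => Xs k i j) ∈ K := by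
    intro k
    rw [hKdef, Set.mem_univ_pi]
    intro i
    rw [Set.mem_univ_pi]
    intro j
    exact Set.mem_Icc.mpr (abs_le.mp (habs k i j))
  obtain ⟨Zl, hZlK, φ, hφ, hφt⟩ := hKcomp.tendsto_subseq hmemK
  have hent : ∀ i j, Tendsto (fun k => Xs (φ k) i j) atTop (nhds (Zl i j)) := by
    intro i j
    have h1 := tendsto_pi_nhds.mp hφt i
    exact tendsto_pi_nhds.mp h1 j
  refine ⟨Matrix.of Zl, ?_, ?_, ?_⟩
  · exact psd_limit (fun k => Xs (φ k)) (Matrix.of Zl) (fun k => hpsd (φ k)) hent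
  · intro i j hij
    have hc : (fun k => Xs (φ k) i j) = fun _ => (0:ℝ) := by
      funext k
      exact hsupp (φ k) i j hij
    have h1 := hent i j
    rw [hc] at h1
    show Zl i j = 0
    exact tendsto_nhds_unique h1 tendsto_const_nhds
  · intro p hp
    have hc : (fun k => Xs (φ k) p.1.1 p.1.2) = fun k => yseq (φ k) p := by
      funext k
      exact hmatch (φ k) p hp
    have h1 := hent p.1.1 p.1.2
    rw [hc] at h1
    have h2 : Tendsto (fun k => yseq (φ k) p) atTop (nhds (y p)) :=
      (hco p).comp hφ.tendsto_atTop
    exact tendsto_nhds_unique h1 h2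

end AuxLemmas

/-- If `t` is a nonnegative integer with `t < n` and
`|E| < (t² + 3t)/2`, then `P(Sⁿᵣ₊)` is closed for every integer `r` with
`t ≤ r ≤ n` if and only if `ℒ` and `ℒᶜ` are disconnected in `G`. -/
theorem stmt1 (n : ℕ) (hn : 2 ≤ n) (E : Finset (Fin n × Fin n))
    (hup : ∀ p ∈ E, p.1 ≤ p.2)
    (t : ℕ) (htn : t < n) (hcard : (E.card : ℝ) < ((t : ℝ) ^ 2 + 3 * t) / 2) :
    (∀ r : ℕ, t ≤ r → r ≤ n →
        IsClosed (proj (↑E : Set (Fin n × Fin n)) '' psdRank (Fin n) r)) ↔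
      (∀ i j : Fin n, (i, i) ∈ E → (j, j) ∉ E →
        ¬ (graphOf (↑E : Set (Fin n × Fin n))).Reachable i j) := by
  classical
  have hcardN : E.card < (t + 2).choose 2 := by
    have h3 : (2 * E.card : ℝ) < (t:ℝ)*(t:ℝ) + 3*t := by nlinarith [hcard]
    have h2 : 2 * E.card < t*t + 3*t := by exact_mod_cast h3
    have h4 : (t+2).choose 2 = (t+2)*(t+1)/2 := by
      rw [Nat.choose_two_right]
      norm_num
    have h5 : (t+2) * (t+1) = t*t + 3*t + 2 := by ring
    generalize hG : t*t = m at h2 h5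
    omega
  constructor
  · intro hcl i j hi hj hreach
    obtain ⟨wlk⟩ := hreach
    obtain ⟨u, w', hu, hw', hadj⟩ := cross (L := fun v => (v, v) ∈ E) wlk hi hj
    obtain ⟨hne, hor⟩ := hadj
    have hor' : (u, w') ∈ E ∨ (w', u) ∈ E := by
      rcases hor with h | h
      · exact Or.inl (Finset.mem_coe.mp h)
      · exact Or.inr (Finset.mem_coe.mp h)
    exact forward E (hcl n (le_of_lt htn) le_rfl) hne hor' hu hw'
  · intro hdisc r hrt hrn
    exact reverse hn E hup t hcardN hdisc r hrt
end

section
/- Let A be an m×m real positive semidefinite matrix and B a p×p real positive semidefinite matrix. Consider all positive semidefinite completions X = [A, Y; Yᵀ, B] ∈ S^{m+p} with Y ∈ ℝ^{m×p} arbitrary. Then the minimum of rank(X) over all such PSD completions equals max{rank A, rank B}, and the maximum of rank(X) over all such PSD completions equals rank A + rank B; both values are attained. -/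
open Matrix Module

section AuxLemmas

variable {l m n o : Type*} [Fintype l] [Fintype m] [Fintype n] [Fintype o]

set_option linter.unusedSectionVars false

private lemma aux_rank_submatrix_le (A : Matrix m n ℝ) (f : l → m) (g : o → n) :
    (A.submatrix f g).rank ≤ A.rank := by
  classical
  have h1 : A.submatrix f g = (Matrix.of fun i j => if f i = j then (1:ℝ) else 0) *
      (A * (Matrix.of fun i j => if g j = i then (1:ℝ) else 0)) := by
    ext i j
    simp [Matrix.mul_apply, Finset.sum_ite_eq, Finset.sum_ite_eq']
  rw [h1]
  exact (Matrix.rank_mul_le_right _ _).trans (Matrix.rank_mul_le_left _ _)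

private lemma aux_rank_add_le (A B : Matrix m n ℝ) : (A + B).rank ≤ A.rank + B.rank := by
  classical
  simp only [Matrix.rank]
  have h : LinearMap.range (A + B).mulVecLin ≤
      LinearMap.range A.mulVecLin ⊔ LinearMap.range B.mulVecLin := by
    rw [Matrix.mulVecLin_add]
    rintro x ⟨v, rfl⟩
    exact Submodule.mem_sup.2 ⟨A.mulVecLin v, ⟨v, rfl⟩, B.mulVecLin v, ⟨v, rfl⟩, rfl⟩
  exact (Submodule.finrank_mono h).trans
    (Submodule.finrank_add_le_finrank_add_finrank _ _)

end AuxLemmas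

private lemma aux_exists_factor {n k : ℕ} (A : Matrix (Fin n) (Fin n) ℝ) (hA : A.PosSemidef)
    (hk : A.rank ≤ k) : ∃ C : Matrix (Fin n) (Fin k) ℝ, C * Cᵀ = A := by
  classical
  have hH : A.IsHermitian := hA.isHermitian
  set ev : Fin n → ℝ := hH.eigenvalues with hev
  obtain ⟨f⟩ : Nonempty ({i // ev i ≠ 0} ↪ Fin k) := by
    apply Function.Embedding.nonempty_of_card_le
    rw [Fintype.card_fin, ← hH.rank_eq_card_non_zero_eigs]
    exact hk
  set E : Matrix (Fin n) (Fin k) ℝ := Matrix.of fun i j =>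
    if h : ev i ≠ 0 then (if f ⟨i, h⟩ = j then Real.sqrt (ev i) else 0) else 0 with hEdef
  have hE : E * Eᵀ = Matrix.diagonal ev := by
    ext i i'
    simp only [Matrix.mul_apply, Matrix.transpose_apply, Matrix.diagonal_apply, hEdef,
      Matrix.of_apply]
    by_cases hi : ev i ≠ 0
    · by_cases hi' : ev i' ≠ 0
      · simp only [dif_pos hi, dif_pos hi', ite_mul, zero_mul, mul_ite, mul_zero,
          Finset.sum_ite_eq, Finset.mem_univ, if_true]
        by_cases hii : f ⟨i', hi'⟩ = f ⟨i, hi⟩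
        · have : i = i' := by
            have := f.injective hii
            exact (congrArg Subtype.val this).symm
          subst this
          simp [Real.mul_self_sqrt (hA.eigenvalues_nonneg i)]
          exact Real.mul_self_sqrt (hA.eigenvalues_nonneg i)
        · have : i ≠ i' := by
            rintro rfl
            exact hii rfl
          simp [hii, this]
      · push_neg at hi'
        have hne : ¬ (i = i') := by rintro rfl; exact hi hi'
        simp [hi', hne]
    · push_neg at hi
      have : ∀ j, (if h : ev i ≠ 0 then (if f ⟨i, h⟩ = j then Real.sqrt (ev i) else 0) else 0)
          = 0 := by
        intro j; simp [hi]
      simp only [this, zero_mul, Finset.sum_const_zero]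
      by_cases hii : i = i'
      · subst hii; simp [hi]
      · simp [hii]
  refine ⟨(hH.eigenvectorUnitary : Matrix (Fin n) (Fin n) ℝ) * E, ?_⟩
  set U : Matrix (Fin n) (Fin n) ℝ := (hH.eigenvectorUnitary : Matrix (Fin n) (Fin n) ℝ)
  have hUE : (U * E) * (U * E)ᵀ = U * (E * Eᵀ) * Uᵀ := by
    rw [Matrix.transpose_mul]
    simp only [Matrix.mul_assoc]
  rw [hUE, hE]
  have hspec := hH.spectral_theorem
  have h1 : (RCLike.ofReal ∘ ev : Fin n → ℝ) = ev := by
    ext i; simp [RCLike.ofReal]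
  rw [h1] at hspec
  have h2 : star U = Uᵀ := by
    rw [Matrix.star_eq_conjTranspose, Matrix.conjTranspose_eq_transpose_of_trivial]
  rw [← h2]
  exact hspec.symm

variable {m p : ℕ}

private lemma aux_rank_cornerA (A : Matrix (Fin m) (Fin m) ℝ) :
    (fromBlocks A 0 (0 : Matrix (Fin p) (Fin m) ℝ) (0 : Matrix (Fin p) (Fin p) ℝ)).rank
      = A.rank := by
  classical
  apply le_antisymm
  · have h1 : fromBlocks A 0 (0 : Matrix (Fin p) (Fin m) ℝ) (0 : Matrix (Fin p) (Fin p) ℝ) =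
        fromRows (1 : Matrix (Fin m) (Fin m) ℝ) (0 : Matrix (Fin p) (Fin m) ℝ) *
          (A * fromCols (1 : Matrix (Fin m) (Fin m) ℝ) (0 : Matrix (Fin m) (Fin p) ℝ)) := by
      rw [fromRows_mul, Matrix.one_mul, Matrix.zero_mul, mul_fromCols, Matrix.mul_one,
        Matrix.mul_zero, ← fromCols_zero, ← fromRows_fromCols_eq_fromBlocks]
    rw [h1]
    exact (Matrix.rank_mul_le_right _ _).trans (Matrix.rank_mul_le_left _ _)
  · have h2 : A = (fromBlocks A 0 (0 : Matrix (Fin p) (Fin m) ℝ)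
        (0 : Matrix (Fin p) (Fin p) ℝ)).submatrix Sum.inl Sum.inl := by
      ext i j; simp
    conv_lhs => rw [h2]
    exact aux_rank_submatrix_le _ _ _

private lemma aux_rank_cornerB (B : Matrix (Fin p) (Fin p) ℝ) :
    (fromBlocks (0 : Matrix (Fin m) (Fin m) ℝ) (0 : Matrix (Fin m) (Fin p) ℝ)
      (0 : Matrix (Fin p) (Fin m) ℝ) B).rank = B.rank := by
  classical
  apply le_antisymm
  · have h1 : fromBlocks (0 : Matrix (Fin m) (Fin m) ℝ) (0 : Matrix (Fin m) (Fin p) ℝ)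
        (0 : Matrix (Fin p) (Fin m) ℝ) B =
        fromRows (0 : Matrix (Fin m) (Fin p) ℝ) (1 : Matrix (Fin p) (Fin p) ℝ) *
          (B * fromCols (0 : Matrix (Fin p) (Fin m) ℝ) (1 : Matrix (Fin p) (Fin p) ℝ)) := by
      rw [fromRows_mul, Matrix.one_mul, Matrix.zero_mul, mul_fromCols, Matrix.mul_one,
        Matrix.mul_zero, ← fromCols_zero, ← fromRows_fromCols_eq_fromBlocks]
    rw [h1]
    exact (Matrix.rank_mul_le_right _ _).trans (Matrix.rank_mul_le_left _ _)
  · have h2 : B = (fromBlocks (0 : Matrix (Fin m) (Fin m) ℝ) (0 : Matrix (Fin m) (Fin p) ℝ)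
        (0 : Matrix (Fin p) (Fin m) ℝ) B).submatrix Sum.inr Sum.inr := by
      ext i j; simp
    conv_lhs => rw [h2]
    exact aux_rank_submatrix_le _ _ _

private lemma aux_rank_diag (A : Matrix (Fin m) (Fin m) ℝ) (B : Matrix (Fin p) (Fin p) ℝ) :
    (fromBlocks A 0 0 B).rank = A.rank + B.rank := by
  classical
  set XA : Matrix (Fin m ⊕ Fin p) (Fin m ⊕ Fin p) ℝ :=
    fromBlocks A 0 (0 : Matrix (Fin p) (Fin m) ℝ) (0 : Matrix (Fin p) (Fin p) ℝ) with hXA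
  set XB : Matrix (Fin m ⊕ Fin p) (Fin m ⊕ Fin p) ℝ :=
    fromBlocks (0 : Matrix (Fin m) (Fin m) ℝ) (0 : Matrix (Fin m) (Fin p) ℝ)
      (0 : Matrix (Fin p) (Fin m) ℝ) B with hXB
  have hsum : fromBlocks A (0 : Matrix (Fin m) (Fin p) ℝ) (0 : Matrix (Fin p) (Fin m) ℝ) B
      = XA + XB := by
    ext i j
    cases i <;> cases j <;> simp [hXA, hXB]
  apply le_antisymm
  · rw [hsum]
    exact (aux_rank_add_le XA XB).trans
      (by rw [aux_rank_cornerA, aux_rank_cornerB])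
  · have hAle : LinearMap.range XA.mulVecLin ≤
        LinearMap.range (fromBlocks A 0 0 B).mulVecLin := by
      rintro x ⟨u, rfl⟩
      refine ⟨Sum.elim (u ∘ Sum.inl) 0, ?_⟩
      funext i
      cases i <;>
        simp [Matrix.mulVecLin_apply, Matrix.mulVec, dotProduct, Fintype.sum_sum_type, hXA]
    have hBle : LinearMap.range XB.mulVecLin ≤
        LinearMap.range (fromBlocks A 0 0 B).mulVecLin := by
      rintro x ⟨u, rfl⟩
      refine ⟨Sum.elim 0 (u ∘ Sum.inr), ?_⟩
      funext i
      cases i <;>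
        simp [Matrix.mulVecLin_apply, Matrix.mulVec, dotProduct, Fintype.sum_sum_type, hXB]
    have hdisj : LinearMap.range XA.mulVecLin ⊓ LinearMap.range XB.mulVecLin = ⊥ := by
      rw [Submodule.eq_bot_iff]
      intro x hx
      obtain ⟨hxa, hxb⟩ := Submodule.mem_inf.mp hx
      obtain ⟨u, hu⟩ := hxa
      obtain ⟨v, hv⟩ := hxb
      funext i
      cases i with
      | inl i =>
        rw [← hv]
        simp [Matrix.mulVecLin_apply, Matrix.mulVec, dotProduct, Fintype.sum_sum_type, hXB]
      | inr i =>
        rw [← hu]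
        simp [Matrix.mulVecLin_apply, Matrix.mulVec, dotProduct, Fintype.sum_sum_type, hXA]
    have h3 := Submodule.finrank_sup_add_finrank_inf_eq
      (LinearMap.range XA.mulVecLin) (LinearMap.range XB.mulVecLin)
    rw [hdisj, finrank_bot, add_zero] at h3
    have h4 := Submodule.finrank_mono (sup_le hAle hBle)
    have h5 : A.rank + B.rank = XA.rank + XB.rank := by
      rw [aux_rank_cornerA, aux_rank_cornerB]
    rw [h5]
    simp only [Matrix.rank] at h4 ⊢
    rw [← h3]
    exact h4

open scoped MatrixOrder in
private lemma aux_rank_completion_le {A : Matrix (Fin m) (Fin m) ℝ}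
    {B : Matrix (Fin p) (Fin p) ℝ} {Y : Matrix (Fin m) (Fin p) ℝ}
    (h : (fromBlocks A Y Yᵀ B).PosSemidef) :
    (fromBlocks A Y Yᵀ B).rank ≤ A.rank + B.rank := by
  classical
  obtain ⟨S, hS⟩ := CStarAlgebra.nonneg_iff_eq_star_mul_self.mp h.nonneg
  rw [star_eq_conjTranspose] at hS
  set S₁ : Matrix (Fin m ⊕ Fin p) (Fin m) ℝ := S.submatrix id Sum.inl with hS₁
  set S₂ : Matrix (Fin m ⊕ Fin p) (Fin p) ℝ := S.submatrix id Sum.inr with hS₂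
  have hSt : Sᴴ = Sᵀ := Matrix.conjTranspose_eq_transpose_of_trivial S
  rw [hSt] at hS
  have hA' : A = S₁ᵀ * S₁ := by
    ext i j
    have h1 : (fromBlocks A Y Yᵀ B) (Sum.inl i) (Sum.inl j) = (Sᵀ * S) (Sum.inl i) (Sum.inl j) :=
      by rw [hS]
    simpa [Matrix.mul_apply, hS₁] using h1
  have hB' : B = S₂ᵀ * S₂ := by
    ext i j
    have h1 : (fromBlocks A Y Yᵀ B) (Sum.inr i) (Sum.inr j) = (Sᵀ * S) (Sum.inr i) (Sum.inr j) :=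
      by rw [hS]
    simpa [Matrix.mul_apply, hS₂] using h1
  have hrA : A.rank = S₁.rank := by rw [hA', Matrix.rank_transpose_mul_self]
  have hrB : B.rank = S₂.rank := by rw [hB', Matrix.rank_transpose_mul_self]
  have hsplit : S = S₁ * (Matrix.of fun (i : Fin m) (j : Fin m ⊕ Fin p) =>
        if Sum.inl i = j then (1:ℝ) else 0) +
      S₂ * (Matrix.of fun (i : Fin p) (j : Fin m ⊕ Fin p) =>
        if Sum.inr i = j then (1:ℝ) else 0) := by
    ext i j
    cases j <;> simp [Matrix.mul_apply, hS₁, hS₂, Finset.sum_ite_eq, Finset.sum_ite_eq']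
  have hrS : S.rank ≤ A.rank + B.rank := by
    rw [hrA, hrB, hsplit]
    exact (aux_rank_add_le _ _).trans
      (add_le_add (Matrix.rank_mul_le_left _ _) (Matrix.rank_mul_le_left _ _))
  rw [hS, Matrix.rank_transpose_mul_self]
  exact hrS

private lemma aux_rank_lower {A : Matrix (Fin m) (Fin m) ℝ}
    {B : Matrix (Fin p) (Fin p) ℝ} {Y : Matrix (Fin m) (Fin p) ℝ} :
    max A.rank B.rank ≤ (fromBlocks A Y Yᵀ B).rank := by
  classical
  apply max_le
  · have h2 : A = (fromBlocks A Y Yᵀ B).submatrix Sum.inl Sum.inl := by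
      ext i j; simp
    conv_lhs => rw [h2]
    exact aux_rank_submatrix_le _ _ _
  · have h2 : B = (fromBlocks A Y Yᵀ B).submatrix Sum.inr Sum.inr := by
      ext i j; simp
    conv_lhs => rw [h2]
    exact aux_rank_submatrix_le _ _ _

/-- For PSD matrices `A` (of size `m`) and `B` (of size `p`),
over all PSD completions `[A, Y; Yᵀ, B]`, the minimum rank equals
`max (rank A) (rank B)` and the maximum rank equals `rank A + rank B`;
both values are attained. -/
theorem stmt3 (m p : ℕ) (A : Matrix (Fin m) (Fin m) ℝ) (B : Matrix (Fin p) (Fin p) ℝ)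
    (hA : A.PosSemidef) (hB : B.PosSemidef) :
    IsLeast {k : ℕ | ∃ Y : Matrix (Fin m) (Fin p) ℝ,
        (fromBlocks A Y Yᵀ B).PosSemidef ∧ (fromBlocks A Y Yᵀ B).rank = k}
      (max A.rank B.rank) ∧
    IsGreatest {k : ℕ | ∃ Y : Matrix (Fin m) (Fin p) ℝ,
        (fromBlocks A Y Yᵀ B).PosSemidef ∧ (fromBlocks A Y Yᵀ B).rank = k}
      (A.rank + B.rank) := by
  classical
  constructor
  · constructor
    · -- membership: a completion of rank max(rank A, rank B)
      set r := max A.rank B.rank with hr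
      obtain ⟨C, hC⟩ := aux_exists_factor A hA (le_max_left _ _)
      obtain ⟨D, hD⟩ := aux_exists_factor B hB (le_max_right _ _)
      set M : Matrix (Fin m ⊕ Fin p) (Fin r) ℝ := fromRows C D with hM
      refine ⟨C * Dᵀ, ?_, ?_⟩
      · have hX : fromBlocks A (C * Dᵀ) (C * Dᵀ)ᵀ B = M * Mᵀ := by
          rw [hM, transpose_fromRows, fromRows_mul_fromCols, hC, hD,
            Matrix.transpose_mul, Matrix.transpose_transpose]
        rw [hX]
        have := Matrix.posSemidef_self_mul_conjTranspose M
        rwa [Matrix.conjTranspose_eq_transpose_of_trivial] at this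
      · have hX : fromBlocks A (C * Dᵀ) (C * Dᵀ)ᵀ B = M * Mᵀ := by
          rw [hM, transpose_fromRows, fromRows_mul_fromCols, hC, hD,
            Matrix.transpose_mul, Matrix.transpose_transpose]
        rw [hX, Matrix.rank_self_mul_transpose]
        apply le_antisymm
        · exact M.rank_le_card_width.trans (by simp)
        · apply max_le
          · have hsub : C = M.submatrix Sum.inl id := by
              ext i j; simp [hM]
            have h1 : A.rank = C.rank :=
              (congrArg Matrix.rank hC).symm.trans (Matrix.rank_self_mul_transpose C)
            rw [h1, hsub]
            exact aux_rank_submatrix_le _ _ _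
          · have hsub : D = M.submatrix Sum.inr id := by
              ext i j; simp [hM]
            have h1 : B.rank = D.rank :=
              (congrArg Matrix.rank hD).symm.trans (Matrix.rank_self_mul_transpose D)
            rw [h1, hsub]
            exact aux_rank_submatrix_le _ _ _
    · -- lower bound
      rintro k ⟨Y, hY, rfl⟩
      exact aux_rank_lower
  · constructor
    · -- membership: the block-diagonal completion
      refine ⟨0, ?_, ?_⟩
      · rw [Matrix.transpose_zero]
        obtain ⟨C, hC⟩ := aux_exists_factor A hA (le_refl _)
        obtain ⟨D, hD⟩ := aux_exists_factor B hB (le_refl _)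
        have hX : fromBlocks A (0 : Matrix (Fin m) (Fin p) ℝ) (0 : Matrix (Fin p) (Fin m) ℝ) B
            = (fromBlocks C 0 0 D) * (fromBlocks C 0 0 D)ᵀ := by
          rw [Matrix.fromBlocks_transpose, Matrix.fromBlocks_multiply]
          simp [hC, hD]
        rw [hX]
        have := Matrix.posSemidef_self_mul_conjTranspose (fromBlocks C 0 0 D)
        rwa [Matrix.conjTranspose_eq_transpose_of_trivial] at this
      · rw [Matrix.transpose_zero]
        exact aux_rank_diag A B
    · -- upper bound
      rintro k ⟨Y, hY, rfl⟩
      exact aux_rank_completion_le hY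
end

section
/- Let G be a connected loopless graph on at least 2 vertices. Then G is complete bipartite if and only if G contains no triangle and every path of length 3 in G closes into a 4-cycle, i.e., for all distinct vertices v1, v2, v3, v4 with v1v2 ∈ E, v2v3 ∈ E and v3v4 ∈ E one also has v1v4 ∈ E. -/
/-- A graph is complete bipartite: the vertices can be partitioned into two
(nonempty) parts so that the edges are exactly the pairs with one endpoint in
each part. -/
def IsCompleteBipartite {V : Type} (G : SimpleGraph V) : Prop :=
  ∃ V1 V2 : Set V, V1.Nonempty ∧ V2.Nonempty ∧ (∀ v, v ∈ V1 ↔ v ∉ V2) ∧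
    ∀ u v, G.Adj u v ↔ ((u ∈ V1 ∧ v ∈ V2) ∨ (u ∈ V2 ∧ v ∈ V1))

/-- A connected loopless graph on at least two vertices is
complete bipartite if and only if it contains no triangle and every path of
length 3 closes into a 4-cycle. -/
theorem stmt10 (V : Type) [Fintype V] (G : SimpleGraph V)
    (hcard : 2 ≤ Fintype.card V) (hconn : G.Connected) :
    IsCompleteBipartite G ↔
      ((¬ ∃ a b c : V, G.Adj a b ∧ G.Adj a c ∧ G.Adj b c) ∧
        ∀ v1 v2 v3 v4 : V, v1 ≠ v2 → v1 ≠ v3 → v1 ≠ v4 → v2 ≠ v3 → v2 ≠ v4 → v3 ≠ v4 →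
          G.Adj v1 v2 → G.Adj v2 v3 → G.Adj v3 v4 → G.Adj v1 v4) := by
  constructor
  · rintro ⟨V1, V2, h1, h2, hpart, hadj⟩
    constructor
    · rintro ⟨a, b, c, hab, hac, hbc⟩
      rw [hadj] at hab hac hbc
      have := hpart a; have := hpart b; have := hpart c
      tauto
    · intro v1 v2 v3 v4 _ _ _ _ _ _ h12 h23 h34
      rw [hadj] at h12 h23 h34 ⊢
      have := hpart v1; have := hpart v2; have := hpart v3; have := hpart v4
      tauto
  · rintro ⟨htri, hpath⟩
    -- find an edge a–b
    obtain ⟨x, y, hxy⟩ := Fintype.exists_pair_of_one_lt_card (by omega : 1 < Fintype.card V)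
    obtain ⟨w⟩ := hconn x y
    obtain ⟨a, b, hab⟩ : ∃ a b, G.Adj a b := by
      cases w with
      | nil => exact absurd rfl hxy
      | cons h p => exact ⟨_, _, h⟩
    -- no vertex is adjacent to both a and b
    have hnb : ∀ v, ¬ (G.Adj v a ∧ G.Adj v b) := by
      rintro v ⟨hva, hvb⟩
      exact htri ⟨a, b, v, hab, hva.symm, hvb.symm⟩
    -- one step: adjacency to {a,b} propagates along edges
    have step : ∀ u w, (G.Adj u a ∨ G.Adj u b) → G.Adj u w → (G.Adj w a ∨ G.Adj w b) := by
      intro u w hu huw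
      rcases hu with hua | hub
      · by_cases hwa : w = a
        · subst hwa; exact Or.inr hab
        by_cases hwb : w = b
        · subst hwb; exact Or.inl hab.symm
        by_cases hub : u = b
        · subst hub; exact Or.inr huw.symm
        · exact Or.inr (hpath b a u w hab.ne' (Ne.symm hub) (Ne.symm hwb) hua.ne'
            (Ne.symm hwa) huw.ne hab.symm hua.symm huw).symm
      · by_cases hwb : w = b
        · subst hwb; exact Or.inl hab.symm
        by_cases hwa : w = a
        · subst hwa; exact Or.inr hab
        by_cases hua : u = a
        · subst hua; exact Or.inl huw.symm
        · exact Or.inl (hpath a b u w hab.ne (Ne.symm hua) (Ne.symm hwa) hub.ne'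
            (Ne.symm hwb) huw.ne hab hub.symm huw).symm
    -- every vertex is adjacent to a or to b
    have key : ∀ v, G.Adj v a ∨ G.Adj v b := by
      have walkind : ∀ (u v : V), G.Walk u v → (G.Adj u a ∨ G.Adj u b) →
          (G.Adj v a ∨ G.Adj v b) := by
        intro u v w
        induction w with
        | nil => exact id
        | cons h p ih => intro hu; exact ih (step _ _ hu h)
      intro v
      obtain ⟨w⟩ := hconn a v
      exact walkind a v w (Or.inr hab)
    -- the cross adjacency
    have cross : ∀ u v, G.Adj u b → G.Adj v a → G.Adj u v := by
      intro u v hub hva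
      by_cases hua : u = a
      · subst hua; exact hva.symm
      by_cases hvb : v = b
      · subst hvb; exact hub
      · refine hpath u b a v hub.ne hua ?_ hab.ne' (Ne.symm hvb) hva.ne' hub hab.symm hva.symm
        rintro rfl; exact hnb u ⟨hva, hub⟩
    refine ⟨{v | G.Adj v b}, {v | G.Adj v a}, ⟨a, hab⟩, ⟨b, hab.symm⟩, ?_, ?_⟩
    · intro v
      constructor
      · intro hvb hva; exact hnb v ⟨hva, hvb⟩
      · intro hva; exact (key v).resolve_left hva
    · intro u v
      constructor
      · intro huv
        rcases key u with hua | hub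
        · refine Or.inr ⟨hua, ?_⟩
          rcases key v with hva | hvb
          · exact absurd ⟨u, a, v, hua, huv, hva.symm⟩ htri
          · exact hvb
        · refine Or.inl ⟨hub, ?_⟩
          rcases key v with hva | hvb
          · exact hva
          · exact absurd ⟨u, b, v, hub, huv, hvb.symm⟩ htri
      · rintro (⟨hub, hva⟩ | ⟨hua, hvb⟩)
        · exact cross u v hub hva
        · exact (cross v u hvb hua).symm
end

section
/- Let A be an m×m real positive semidefinite matrix and B ∈ ℝ^{m×p}, and suppose there exists a symmetric C ∈ S^p such that the block matrix [A, B; Bᵀ, C] is positive semidefinite. Then: (i) every X ∈ S^p for which [A, B; Bᵀ, X] is positive semidefinite satisfies rank([A, B; Bᵀ, X]) ≥ rank(A); and (ii) there exists X ∈ S^p (namely X = Bᵀ A† B, where A† is the Moore–Penrose pseudoinverse of A) such that [A, B; Bᵀ, X] is positive semidefinite and rank([A, B; Bᵀ, X]) = rank(A). Hence the minimum rank over all PSD completions of [A, B; Bᵀ, ?] equals rank(A). -/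
open Matrix

/-- `A'` is the Moore–Penrose pseudoinverse of `A` (the four Penrose
equations). -/
def IsMoorePenroseInv {m : ℕ} (A A' : Matrix (Fin m) (Fin m) ℝ) : Prop :=
  A * A' * A = A ∧ A' * A * A' = A' ∧ (A * A')ᵀ = A * A' ∧ (A' * A)ᵀ = A' * A

/-- Every real symmetric matrix has a Moore–Penrose pseudoinverse. -/
lemma exists_isMoorePenroseInv {m : ℕ} {A : Matrix (Fin m) (Fin m) ℝ}
    (hA : A.IsHermitian) : ∃ P, IsMoorePenroseInv A P := by
  classical
  set U : Matrix (Fin m) (Fin m) ℝ := (hA.eigenvectorUnitary : Matrix (Fin m) (Fin m) ℝ) with hUdef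
  have hU : star U * U = 1 := mem_unitaryGroup_iff'.mp hA.eigenvectorUnitary.2
  set d : Fin m → ℝ := hA.eigenvalues with hd
  have hspec : A = U * diagonal d * star U := by
    have := hA.spectral_theorem
    simpa [RCLike.ofReal_real_eq_id] using this
  have key : ∀ e f : Fin m → ℝ,
      (U * diagonal e * star U) * (U * diagonal f * star U)
        = U * diagonal (fun i => e i * f i) * star U := by
    intro e f
    have hUU : ∀ {k : Type} [Fintype k] (X : Matrix (Fin m) k ℝ),
        star U * (U * X) = X := by
      intro k _ X; rw [← Matrix.mul_assoc, hU, Matrix.one_mul]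
    simp only [Matrix.mul_assoc]
    rw [hUU, ← Matrix.mul_assoc (diagonal e) (diagonal f) (star U), diagonal_mul_diagonal]
  have hstar : star U = Uᵀ := by
    rw [Matrix.star_eq_conjTranspose, conjTranspose_eq_transpose_of_trivial]
  have symkey : ∀ e : Fin m → ℝ, (U * diagonal e * star U)ᵀ = U * diagonal e * star U := by
    intro e
    rw [hstar, transpose_mul, transpose_mul, transpose_transpose, diagonal_transpose,
      Matrix.mul_assoc]
  refine ⟨U * diagonal (fun i => (d i)⁻¹) * star U, ?_, ?_, ?_, ?_⟩
  · rw [hspec, key, key]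
    have : (fun i => (d i * (d i)⁻¹) * d i) = d := by
      funext i; by_cases h : d i = 0 <;> field_simp [h]
    rw [this]
  · rw [hspec, key, key]
    have : (fun i => ((d i)⁻¹ * d i) * (d i)⁻¹) = fun i => (d i)⁻¹ := by
      funext i; by_cases h : d i = 0 <;> field_simp [h]
    rw [this]
  · rw [hspec, key, symkey]
  · rw [hspec, key, symkey]

/-- Let `A` be PSD and suppose `[A, B; Bᵀ, C]` is PSD for some
symmetric `C`.  Then (i) every PSD completion `[A, B; Bᵀ, X]` has rank at least
`rank A`; (ii) the choice `X = Bᵀ A† B` (with `A†` the Moore–Penrose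
pseudoinverse of `A`) gives a PSD completion of rank exactly `rank A`; hence the
minimum rank over all PSD completions equals `rank A`. -/
theorem stmt14 (m p : ℕ) (A : Matrix (Fin m) (Fin m) ℝ) (hA : A.PosSemidef)
    (B : Matrix (Fin m) (Fin p) ℝ)
    (hC : ∃ C : Matrix (Fin p) (Fin p) ℝ, Cᵀ = C ∧ (fromBlocks A B Bᵀ C).PosSemidef) :
    (∀ X : Matrix (Fin p) (Fin p) ℝ, Xᵀ = X → (fromBlocks A B Bᵀ X).PosSemidef →
        A.rank ≤ (fromBlocks A B Bᵀ X).rank) ∧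
    (∀ Adag : Matrix (Fin m) (Fin m) ℝ, IsMoorePenroseInv A Adag →
        (fromBlocks A B Bᵀ (Bᵀ * Adag * B)).PosSemidef ∧
          (fromBlocks A B Bᵀ (Bᵀ * Adag * B)).rank = A.rank) ∧
    IsLeast {k : ℕ | ∃ X : Matrix (Fin p) (Fin p) ℝ, Xᵀ = X ∧
        (fromBlocks A B Bᵀ X).PosSemidef ∧ (fromBlocks A B Bᵀ X).rank = k}
      A.rank := by
  obtain ⟨C, hCsym, hCpsd⟩ := hC
  have hAsym : Aᵀ = A := by
    rw [← conjTranspose_eq_transpose_of_trivial]; exact hA.1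
  -- Part (i): rank A ≤ rank of any block completion
  have part1 : ∀ X : Matrix (Fin p) (Fin p) ℝ, A.rank ≤ (fromBlocks A B Bᵀ X).rank := by
    intro X
    have hEq : fromCols (1 : Matrix (Fin m) (Fin m) ℝ) (0 : Matrix (Fin m) (Fin p) ℝ) *
        fromBlocks A B Bᵀ X *
        fromRows (1 : Matrix (Fin m) (Fin m) ℝ) (0 : Matrix (Fin p) (Fin m) ℝ) = A := by
      rw [fromCols_mul_fromBlocks, fromCols_mul_fromRows]
      simp
    conv_lhs => rw [← hEq]
    exact (rank_mul_le_left _ _).trans (rank_mul_le_right _ _)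
  -- decompose the PSD witness
  obtain ⟨W, hW⟩ : ∃ W : Matrix (Fin m ⊕ Fin p) (Fin m ⊕ Fin p) ℝ,
      fromBlocks A B Bᵀ C = Wᴴ * W := by
    open scoped MatrixOrder in
    obtain ⟨W, hW⟩ := CStarAlgebra.nonneg_iff_eq_star_mul_self.mp hCpsd.nonneg
    exact ⟨W, hW⟩
  rw [conjTranspose_eq_transpose_of_trivial] at hW
  set W₁ : Matrix (Fin m ⊕ Fin p) (Fin m) ℝ := W.submatrix id Sum.inl with hW₁def
  set W₂ : Matrix (Fin m ⊕ Fin p) (Fin p) ℝ := W.submatrix id Sum.inr with hW₂def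
  have hWc : W = fromCols W₁ W₂ := by
    ext i (j | j) <;> simp [fromCols, hW₁def, hW₂def]
  have hWt : Wᵀ * W = fromBlocks (W₁ᵀ * W₁) (W₁ᵀ * W₂) (W₂ᵀ * W₁) (W₂ᵀ * W₂) := by
    rw [hWc, transpose_fromCols, fromRows_mul_fromCols]
  rw [hWt] at hW
  have hA1 : A = W₁ᵀ * W₁ := by
    have := congrArg Matrix.toBlocks₁₁ hW
    simpa [Matrix.toBlocks_fromBlocks₁₁] using this
  have hB1 : B = W₁ᵀ * W₂ := by
    have := congrArg Matrix.toBlocks₁₂ hW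
    simpa [Matrix.toBlocks_fromBlocks₁₂] using this
  -- the main construction, for any Moore-Penrose inverse P of A
  have key : ∀ P : Matrix (Fin m) (Fin m) ℝ, IsMoorePenroseInv A P →
      (Bᵀ * P * B)ᵀ = Bᵀ * P * B ∧ (fromBlocks A B Bᵀ (Bᵀ * P * B)).PosSemidef ∧
        (fromBlocks A B Bᵀ (Bᵀ * P * B)).rank = A.rank := by
    intro P hP
    obtain ⟨h1, h2, h3, h4⟩ := hP
    -- A * P * W₁ᵀ = W₁ᵀ
    have hD : A * P * W₁ᵀ = W₁ᵀ := by
      have hz : (A * P * W₁ᵀ - W₁ᵀ) * (A * P * W₁ᵀ - W₁ᵀ)ᵀ = 0 := by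
        have ht : (A * P * W₁ᵀ - W₁ᵀ)ᵀ = W₁ * (Pᵀ * A) - W₁ := by
          simp [transpose_sub, transpose_mul, hAsym, Matrix.mul_assoc]
        have hA1' : ∀ {k : Type} [Fintype k] (Y : Matrix (Fin m) k ℝ),
            W₁ᵀ * (W₁ * Y) = A * Y := by
          intro k _ Y; rw [← Matrix.mul_assoc, ← hA1]
        have h1' : ∀ {k : Type} [Fintype k] (Y : Matrix (Fin m) k ℝ),
            A * (P * (A * Y)) = A * Y := by
          intro k _ Y
          rw [← Matrix.mul_assoc, ← Matrix.mul_assoc, h1]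
        have h1r : A * (P * A) = A := by rw [← Matrix.mul_assoc]; exact h1
        rw [ht, Matrix.sub_mul, Matrix.mul_sub, Matrix.mul_sub]
        simp only [Matrix.mul_assoc, hA1', h1', h1r, ← hA1]
        abel
      have := Matrix.self_mul_conjTranspose_eq_zero
        (A := A * P * W₁ᵀ - W₁ᵀ) (m := Fin m) (n := Fin m ⊕ Fin p)
      rw [conjTranspose_eq_transpose_of_trivial] at this
      have h0 := this.mp hz
      exact sub_eq_zero.mp h0
    have hAB : A * P * B = B := by
      rw [hB1, ← Matrix.mul_assoc, hD]
    have hABr : A * (P * B) = B := by rw [← Matrix.mul_assoc]; exact hAB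
    have hBA : Bᵀ * (Pᵀ * A) = Bᵀ := by
      have := congrArg Matrix.transpose hAB
      simpa [transpose_mul, hAsym, Matrix.mul_assoc] using this
    have hPtA' : ∀ {k : Type} [Fintype k] (Y : Matrix (Fin m) k ℝ),
        Pᵀ * (A * Y) = A * (P * Y) := by
      intro k _ Y
      rw [← Matrix.mul_assoc, ← Matrix.mul_assoc]
      congr 1
      calc Pᵀ * A = Pᵀ * Aᵀ := by rw [hAsym]
        _ = (A * P)ᵀ := (transpose_mul A P).symm
        _ = A * P := h3
    -- symmetry of the completion block
    have hXsym : (Bᵀ * P * B)ᵀ = Bᵀ * P * B := by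
      have l0 : Pᵀ * B = A * (P * (P * B)) := by
        conv_lhs => rw [← hABr]
        rw [hPtA']
      have l1 : Bᵀ * (Pᵀ * B) = Bᵀ * (A * (P * (P * B))) := by rw [l0]
      have l2 : Bᵀ * (P * B) = Bᵀ * (A * (P * (P * B))) := by
        conv_lhs => rw [show Bᵀ * (P * B) = (Bᵀ * (Pᵀ * A)) * (P * B) from by rw [hBA]]
        simp only [Matrix.mul_assoc]
        rw [hPtA']
      calc (Bᵀ * P * B)ᵀ = Bᵀ * (Pᵀ * B) := by
            simp [transpose_mul, Matrix.mul_assoc]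
        _ = Bᵀ * (A * (P * (P * B))) := l1
        _ = Bᵀ * (P * B) := l2.symm
        _ = Bᵀ * P * B := by rw [Matrix.mul_assoc]
    -- factorization of the completion
    have hfact : (fromCols (1 : Matrix (Fin m) (Fin m) ℝ) (P * B))ᵀ * A *
        fromCols (1 : Matrix (Fin m) (Fin m) ℝ) (P * B)
          = fromBlocks A B Bᵀ (Bᵀ * P * B) := by
      rw [transpose_fromCols, fromRows_mul, fromRows_mul_fromCols, transpose_one,
        transpose_mul]
      rw [Matrix.one_mul, Matrix.mul_one, Matrix.mul_one, Matrix.mul_assoc Bᵀ Pᵀ A, hBA,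
        hABr, Matrix.mul_assoc]
    constructor
    · exact hXsym
    constructor
    · rw [← hfact]
      have := hA.conjTranspose_mul_mul_same
        (B := fromCols (1 : Matrix (Fin m) (Fin m) ℝ) (P * B))
      rwa [conjTranspose_eq_transpose_of_trivial] at this
    · refine le_antisymm ?_ (part1 _)
      rw [← hfact]
      exact (rank_mul_le_left _ _).trans (rank_mul_le_right _ _)
  refine ⟨fun X _ _ => part1 X, fun P hP => ⟨(key P hP).2.1, (key P hP).2.2⟩, ?_, ?_⟩
  · obtain ⟨P, hP⟩ := exists_isMoorePenroseInv hA.1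
    obtain ⟨hs, hpsd, hrk⟩ := key P hP
    exact ⟨Bᵀ * P * B, hs, hpsd, hrk⟩
  · rintro k ⟨X, hX, hpsd, rfl⟩
    exact part1 X
end
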